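/- Let P be a path with k edges (k ∈ ℕ) with end vertices x and y, and let H = (L,H) be a full m-fold cover of P with m ≥ 2. Let u ∈ L(x) and v ∈ L(y). If there is a path in H connecting u and v, then there are exactly ((m−1)^k − (−1)^k)/m + (−1)^k proper H-colorings of P that contain both u and v; otherwise there are exactly ((m−1)^k − (−1)^k)/m such proper H-colorings. -/

import Mathlib

open SimpleGraph Finset

/-- A proper `L`-coloring of `G`: each vertex gets a color from its list and adjacent
vertices get different colors. -/
def ProperLColoring {V : Type*} (G : SimpleGraph V) (L : V → Finset ℕ) (f : V → ℕ) : Prop :=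
  (∀ v, f v ∈ L v) ∧ ∀ ⦃u w⦄, G.Adj u w → f u ≠ f w

/-- `P(G,L)`: the number of proper `L`-colorings of `G`. -/
noncomputable def PList {V : Type*} (G : SimpleGraph V) (L : V → Finset ℕ) : ℕ :=
  Nat.card {f : V → ℕ // ProperLColoring G L f}

/-- `P(G,m)`: the number of proper colorings of `G` with colors from `{1, …, m}`. -/
noncomputable def PChrom {V : Type*} (G : SimpleGraph V) (m : ℕ) : ℕ :=
  PList G (fun _ => Finset.Icc 1 m)

/-- The list color function `P_ℓ(G,m)`: the minimum of `P(G,L)` over all `m`-assignments. -/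
noncomputable def PListFn {V : Type*} (G : SimpleGraph V) (m : ℕ) : ℕ :=
  sInf {n | ∃ L : V → Finset ℕ, (∀ v, (L v).card = m) ∧ n = PList G L}

/-- `G` is enumeratively chromatic-choosable: `P_ℓ(G,m) = P(G,m)` for all `m ∈ ℕ = {1,2,…}`. -/
def EnumChromChoosable {V : Type*} (G : SimpleGraph V) : Prop :=
  ∀ m : ℕ, 1 ≤ m → PListFn G m = PChrom G m

/-- Vertices of the theta graph `Θ(l1,l2,l3)`: the end vertices `u = Sum.inl false` and
`v = Sum.inl true`, together with the `lᵢ - 1` internal vertices of the `i`-th path. -/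
abbrev ThetaVert (l1 l2 l3 : ℕ) : Type :=
  Bool ⊕ (Σ i : Fin 3, Fin (![l1, l2, l3] i - 1))

/-- Edges of the theta graph (up to symmetrization): the internal vertices of the `i`-th path,
in order, form a path from `u` to `v`; if some path has length 1 then `u` and `v` are adjacent. -/
def thetaRel (l1 l2 l3 : ℕ) : ThetaVert l1 l2 l3 → ThetaVert l1 l2 l3 → Prop :=
  fun a b =>
    match a, b with
    | Sum.inl false, Sum.inl true => l1 = 1 ∨ l2 = 1 ∨ l3 = 1
    | Sum.inl false, Sum.inr ⟨_, j⟩ => (j : ℕ) = 0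
    | Sum.inr ⟨i, j⟩, Sum.inl true => (j : ℕ) + 2 = ![l1, l2, l3] i
    | Sum.inr ⟨i, j⟩, Sum.inr ⟨i', j'⟩ => i = i' ∧ (j : ℕ) + 1 = (j' : ℕ)
    | _, _ => False

/-- The theta graph `Θ(l1,l2,l3)`: two end vertices joined by three internally disjoint
paths of lengths `l1`, `l2`, `l3`. -/
def thetaGraph (l1 l2 l3 : ℕ) : SimpleGraph (ThetaVert l1 l2 l3) :=
  SimpleGraph.fromRel (thetaRel l1 l2 l3)

/-- A DP-cover `(L, H)` of `G`. -/
structure DPCover {V : Type*} (G : SimpleGraph V) (W : Type*) where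
  H : SimpleGraph W
  L : V → Set W
  partition : ∀ w : W, ∃! v : V, w ∈ L v
  matching : ∀ ⦃u v : V⦄, G.Adj u v → ∀ ⦃x y y' : W⦄, x ∈ L u → y ∈ L v → y' ∈ L v →
      H.Adj x y → H.Adj x y' → y = y'
  cross : ∀ ⦃x y : W⦄, H.Adj x y → ∃ u v, G.Adj u v ∧ x ∈ L u ∧ y ∈ L v

/-- A proper `H`-coloring: an independent transversal of the cover. -/
def DPCover.IsProperColoring {V W : Type*} {G : SimpleGraph V} (C : DPCover G W)
    (T : Set W) : Prop :=
  (∀ v : V, ∃! w : W, w ∈ T ∧ w ∈ C.L v) ∧ ∀ ⦃x y⦄, x ∈ T → y ∈ T → ¬ C.H.Adj x y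

/-- `P_DP(G, H)`: the number of proper `H`-colorings of `G`. -/
noncomputable def PDPCount {V W : Type*} {G : SimpleGraph V} (C : DPCover G W) : ℕ :=
  Nat.card {T : Set W // C.IsProperColoring T}

/-- The DP color function `P_DP(G,m)`: the minimum of `P_DP(G,H)` over all `m`-fold covers. -/
noncomputable def PDP {V : Type*} (G : SimpleGraph V) (m : ℕ) : ℕ :=
  sInf {n | ∃ (W : Type) (C : DPCover G W), (∀ v, Nat.card ↥(C.L v) = m) ∧ n = PDPCount C}

/-- A cover is full if the matching between the lists of adjacent vertices is perfect. -/
def DPCover.IsFull {V W : Type*} {G : SimpleGraph V} (C : DPCover G W) : Prop :=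
  ∀ ⦃u v : V⦄, G.Adj u v → ∀ x ∈ C.L u, ∃! y, y ∈ C.L v ∧ C.H.Adj x y

-- ### Auxiliary machinery ### --


/-- Count of sequences `a : Fin (k+1) → Fin m` from `c` to `d` with consecutive terms distinct. -/
noncomputable def seqCount (m k : ℕ) (c d : Fin m) : ℕ :=
  Nat.card {a : Fin (k+1) → Fin m //
    a 0 = c ∧ a (Fin.last k) = d ∧ ∀ i : Fin k, a i.castSucc ≠ a i.succ}

lemma seqCount_zero (m : ℕ) (c d : Fin m) :
    seqCount m 0 c d = if c = d then 1 else 0 := by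
  unfold seqCount
  split_ifs with h
  · subst h
    rw [Nat.card_eq_one_iff_unique]
    constructor
    · constructor
      intro a b
      apply Subtype.ext
      funext i
      have : i = 0 := Fin.ext (by omega)
      rw [this, a.2.1, b.2.1]
    · exact ⟨⟨fun _ => c, rfl, rfl, fun i => i.elim0⟩⟩
  · have : IsEmpty {a : Fin 1 → Fin m //
        a 0 = c ∧ a (Fin.last 0) = d ∧ ∀ i : Fin 0, a i.castSucc ≠ a i.succ} := by
      constructor
      rintro ⟨a, h1, h2, -⟩
      exact h (h1 ▸ h2 ▸ rfl)
    exact Nat.card_of_isEmpty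

lemma seqCount_succ (m k : ℕ) (c d : Fin m) :
    seqCount m (k+1) c d = ∑ e : Fin m, if e = d then 0 else seqCount m k c e := by
  classical
  let Fib : Fin m → Type := fun e => {a : Fin (k+1) → Fin m //
    (a 0 = c ∧ a (Fin.last k) = e ∧ ∀ i : Fin k, a i.castSucc ≠ a i.succ) ∧ e ≠ d}
  have hF : ∀ (e : Fin m) (a : Fin (k+1) → Fin m), a 0 = c → a (Fin.last k) = e →
      (∀ i : Fin k, a i.castSucc ≠ a i.succ) → e ≠ d →
      ((Fin.snoc a d : Fin (k+2) → Fin m) 0 = c ∧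
      (Fin.snoc a d : Fin (k+2) → Fin m) (Fin.last (k+1)) = d ∧
      ∀ i : Fin (k+1), (Fin.snoc a d : Fin (k+2) → Fin m) i.castSucc ≠
        (Fin.snoc a d : Fin (k+2) → Fin m) i.succ) := by
    intro e a h1 h2 h3 h4
    refine ⟨?_, Fin.snoc_last _ _, ?_⟩
    · have h0 : (0 : Fin (k+2)) = (0 : Fin (k+1)).castSucc := by simp
      rw [h0, Fin.snoc_castSucc]; exact h1
    · intro i
      induction i using Fin.lastCases with
      | last =>
        rw [Fin.succ_last, Fin.snoc_last, Fin.snoc_castSucc, h2]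
        exact h4
      | cast j =>
        rw [Fin.succ_castSucc, Fin.snoc_castSucc, Fin.snoc_castSucc]
        exact h3 j
  have key : Nat.card (Σ e : Fin m, Fib e) = seqCount m (k+1) c d := by
    apply Nat.card_eq_of_bijective (fun p => ⟨Fin.snoc p.2.1 d,
      hF p.1 p.2.1 p.2.2.1.1 p.2.2.1.2.1 p.2.2.1.2.2 p.2.2.2⟩)
    constructor
    · rintro ⟨e, a, ⟨h1, h2, h3⟩, h4⟩ ⟨e', a', ⟨h1', h2', h3'⟩, h4'⟩ hfa
      have haa : (Fin.snoc a d : Fin (k+2) → Fin m) = Fin.snoc a' d :=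
        congrArg Subtype.val hfa
      have ha : a = a' := by
        have := congrArg Fin.init haa
        rwa [Fin.init_snoc, Fin.init_snoc] at this
      subst ha
      have he : e = e' := h2 ▸ h2'
      subst he
      rfl
    · rintro ⟨b, h1, h2, h3⟩
      refine ⟨⟨b (Fin.last k).castSucc, ⟨Fin.init b, ⟨?_, rfl, ?_⟩, ?_⟩⟩, ?_⟩
      · show b (0 : Fin (k+1)).castSucc = c
        rw [Fin.castSucc_zero]; exact h1
      · intro i
        show b i.castSucc.castSucc ≠ b i.succ.castSucc
        rw [← Fin.succ_castSucc]
        exact h3 i.castSucc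
      · have := h3 (Fin.last k)
        rwa [Fin.succ_last, h2] at this
      · apply Subtype.ext
        show Fin.snoc (Fin.init b) d = b
        rw [← h2]
        exact Fin.snoc_init_self b
  rw [← key]
  haveI : ∀ e, Fintype (Fib e) := fun e => Fintype.ofFinite _
  rw [Nat.card_eq_fintype_card, Fintype.card_sigma]
  apply Finset.sum_congr rfl
  intro e _
  split_ifs with h
  · subst h
    have : IsEmpty (Fib e) := ⟨fun a => a.2.2 rfl⟩
    simp [Fintype.card_eq_zero]
  · rw [← Nat.card_eq_fintype_card]
    unfold seqCount
    apply Nat.card_congr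
    exact Equiv.subtypeEquivRight (fun a => and_iff_left h)

lemma seqCount_eq (m k : ℕ) (hm : 1 ≤ m) (c d : Fin m) :
    (seqCount m k c d : ℚ) =
      (((m : ℚ) - 1) ^ k - (-1) ^ k) / m + if c = d then (-1) ^ k else 0 := by
  have hm0 : (m : ℚ) ≠ 0 := by positivity
  induction k generalizing d with
  | zero =>
    rw [seqCount_zero]
    split_ifs with h <;> simp [hm0]
  | succ k ih =>
    rw [seqCount_succ]
    push_cast [apply_ite (Nat.cast : ℕ → ℚ)]
    have step : ∀ e : Fin m, (if e = d then (0:ℚ) else (seqCount m k c e : ℚ))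
        = (seqCount m k c e : ℚ) - (if e = d then (seqCount m k c e : ℚ) else 0) := by
      intro e; split_ifs <;> ring
    rw [Finset.sum_congr rfl (fun e _ => step e), Finset.sum_sub_distrib,
      Finset.sum_ite_eq' Finset.univ d (fun e => (seqCount m k c e : ℚ))]
    simp only [Finset.mem_univ, if_true]
    have sum_eq : ∑ e : Fin m, (seqCount m k c e : ℚ)
        = ((m:ℚ) - 1) ^ k - (-1) ^ k + (-1) ^ k := by
      rw [Finset.sum_congr rfl (fun e _ => ih e)]
      rw [Finset.sum_add_distrib, Finset.sum_const, Finset.card_univ, Fintype.card_fin,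
        Finset.sum_ite_eq Finset.univ c (fun _ => ((-1:ℚ)) ^ k)]
      simp only [Finset.mem_univ, if_true]
      rw [nsmul_eq_mul]
      field_simp
    rw [sum_eq, ih d]
    split_ifs with h
    · field_simp
      ring
    · field_simp
      ring

namespace PathCoverAux

variable {k : ℕ} {W : Type*} (C : DPCover (pathGraph (k+1)) W)

lemma list_eq {w : W} {i j : Fin (k+1)} (hi : w ∈ C.L i) (hj : w ∈ C.L j) : i = j :=
  ((C.partition w).choose_spec.2 i hi).trans ((C.partition w).choose_spec.2 j hj).symm

lemma adj_cs (i : Fin k) : (pathGraph (k+1)).Adj i.castSucc i.succ := by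
  rw [pathGraph_adj]; left; simp

variable (hfull : C.IsFull)

noncomputable def step {a b : Fin (k+1)} (hab : (pathGraph (k+1)).Adj a b)
    (x : ↥(C.L a)) : ↥(C.L b) :=
  ⟨(hfull hab x.1 x.2).choose, (hfull hab x.1 x.2).choose_spec.1.1⟩

lemma step_adj {a b : Fin (k+1)} (hab : (pathGraph (k+1)).Adj a b) (x : ↥(C.L a)) :
    C.H.Adj x.1 (step C hfull hab x).1 :=
  (hfull hab x.1 x.2).choose_spec.1.2

lemma step_eq {a b : Fin (k+1)} (hab : (pathGraph (k+1)).Adj a b) (x : ↥(C.L a))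
    {y : W} (hy : y ∈ C.L b) (hxy : C.H.Adj x.1 y) : (step C hfull hab x).1 = y :=
  ((hfull hab x.1 x.2).choose_spec.2 y ⟨hy, hxy⟩).symm

lemma step_step {a b : Fin (k+1)} (hab : (pathGraph (k+1)).Adj a b) (x : ↥(C.L a)) :
    step C hfull hab.symm (step C hfull hab x) = x :=
  Subtype.ext (step_eq C hfull hab.symm (step C hfull hab x) x.2
    (step_adj C hfull hab x).symm)

noncomputable def stepEquiv (i : Fin k) : ↥(C.L i.castSucc) ≃ ↥(C.L i.succ) where
  toFun := step C hfull (adj_cs i)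
  invFun := step C hfull (adj_cs i).symm
  left_inv x := step_step C hfull (adj_cs i) x
  right_inv x := step_step C hfull (adj_cs i).symm x

lemma adj_iff_step {a b : Fin (k+1)} (hab : (pathGraph (k+1)).Adj a b)
    (x : ↥(C.L a)) (y : ↥(C.L b)) :
    C.H.Adj x.1 y.1 ↔ y = step C hfull hab x :=
  ⟨fun h => Subtype.ext (step_eq C hfull hab x y.2 h).symm,
   fun h => h ▸ step_adj C hfull hab x⟩

noncomputable def tau : ∀ i : Fin (k+1), ↥(C.L 0) ≃ ↥(C.L i) :=
  Fin.induction (Equiv.refl _) (fun i ih => ih.trans (stepEquiv C hfull i))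

lemma tau_zero : tau C hfull 0 = Equiv.refl _ := rfl

lemma tau_succ (i : Fin k) :
    tau C hfull i.succ = (tau C hfull i.castSucc).trans (stepEquiv C hfull i) :=
  Fin.induction_succ _ _ i

/-- Edge localization. -/
lemma adj_local {x y : W} {a : Fin (k+1)} (hx : x ∈ C.L a) (hxy : C.H.Adj x y) :
    ∃ b, (pathGraph (k+1)).Adj a b ∧ y ∈ C.L b := by
  obtain ⟨p, q, hpq, hxp, hyq⟩ := C.cross hxy
  have : p = a := list_eq C hxp hx
  exact ⟨q, this ▸ hpq, hyq⟩

variable {u : W} (hu : u ∈ C.L 0)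

lemma reach_tau (i : Fin (k+1)) : C.H.Reachable u ((tau C hfull i ⟨u, hu⟩ : W)) := by
  induction i using Fin.induction with
  | zero => exact Reachable.refl u
  | succ i ih =>
    rw [tau_succ]
    exact ih.trans (Adj.reachable (step_adj C hfull (adj_cs i)
      (tau C hfull i.castSucc ⟨u, hu⟩)))

lemma reach_iff {v : W} (hv : v ∈ C.L (Fin.last k)) :
    C.H.Reachable u v ↔ tau C hfull (Fin.last k) ⟨u, hu⟩ = ⟨v, hv⟩ := by
  constructor
  · intro hr
    set A : Set W := {w | ∃ i : Fin (k+1),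
      w = ((tau C hfull i ⟨u, hu⟩ : ↥(C.L i)) : W)} with hA
    have hclosed : ∀ ⦃x y : W⦄, x ∈ A → C.H.Adj x y → y ∈ A := by
      rintro x y ⟨i, hx⟩ hxy
      have h : x ∈ C.L i := hx ▸ (tau C hfull i ⟨u, hu⟩).2
      obtain ⟨b, hib, hyb⟩ := adj_local C h hxy
      rw [pathGraph_adj] at hib
      rcases hib with h1 | h2
      · -- i + 1 = b
        have hik : (i : ℕ) < k := by omega
        refine ⟨(⟨(i : ℕ), hik⟩ : Fin k).succ, ?_⟩
        have hb : b = (⟨(i : ℕ), hik⟩ : Fin k).succ := by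
          apply Fin.ext
          show (b : ℕ) = (i : ℕ) + 1
          omega
        rw [hb] at hyb
        have h' : x ∈ C.L (⟨(i : ℕ), hik⟩ : Fin k).castSucc := h
        have hstep := (adj_iff_step C hfull (adj_cs (⟨(i : ℕ), hik⟩ : Fin k))
          ⟨x, h'⟩ ⟨y, hyb⟩).mp hxy
        have htau : tau C hfull (⟨(i : ℕ), hik⟩ : Fin k).succ ⟨u, hu⟩
            = stepEquiv C hfull _ (tau C hfull (⟨(i : ℕ), hik⟩ : Fin k).castSucc ⟨u, hu⟩) := by
          rw [tau_succ]; rfl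
        have hxt : (⟨x, h'⟩ : ↥(C.L (⟨(i : ℕ), hik⟩ : Fin k).castSucc))
            = tau C hfull (⟨(i : ℕ), hik⟩ : Fin k).castSucc ⟨u, hu⟩ := Subtype.ext hx
        have key : (⟨y, hyb⟩ : ↥(C.L (⟨(i : ℕ), hik⟩ : Fin k).succ))
            = tau C hfull (⟨(i : ℕ), hik⟩ : Fin k).succ ⟨u, hu⟩ := by
          rw [htau, ← hxt]
          exact hstep
        exact congrArg Subtype.val key
      · -- b + 1 = i
        have hbk : (b : ℕ) < k := by omega
        refine ⟨b, ?_⟩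
        have hi : i = (⟨(b : ℕ), hbk⟩ : Fin k).succ := by
          apply Fin.ext
          show (i : ℕ) = (b : ℕ) + 1
          omega
        have h' : x ∈ C.L (⟨(b : ℕ), hbk⟩ : Fin k).succ := hi ▸ h
        have hyb' : y ∈ C.L (⟨(b : ℕ), hbk⟩ : Fin k).castSucc := hyb
        have hstep := (adj_iff_step C hfull (adj_cs (⟨(b : ℕ), hbk⟩ : Fin k)).symm
          ⟨x, h'⟩ ⟨y, hyb'⟩).mp hxy
        have hxt : (⟨x, h'⟩ : ↥(C.L (⟨(b : ℕ), hbk⟩ : Fin k).succ))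
            = tau C hfull (⟨(b : ℕ), hbk⟩ : Fin k).succ ⟨u, hu⟩ := by
          apply Subtype.ext
          exact hx.trans (congrArg (fun t => ((tau C hfull t ⟨u, hu⟩ : ↥(C.L t)) : W)) hi)
        have key : (⟨y, hyb'⟩ : ↥(C.L (⟨(b : ℕ), hbk⟩ : Fin k).castSucc))
            = tau C hfull (⟨(b : ℕ), hbk⟩ : Fin k).castSucc ⟨u, hu⟩ := by
          rw [hstep, hxt, tau_succ]
          exact (stepEquiv C hfull _).left_inv _
        exact congrArg Subtype.val key
    have hwalk : ∀ ⦃x y : W⦄ (_ : C.H.Walk x y), x ∈ A → y ∈ A := by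
      intro x y p
      induction p with
      | nil => exact id
      | cons hadj _ ih => exact fun hx => ih (hclosed hx hadj)
    have huA : u ∈ A := ⟨0, rfl⟩
    obtain ⟨i, hvi⟩ := hwalk hr.some huA
    have hvL : v ∈ C.L i := hvi ▸ (tau C hfull i ⟨u, hu⟩).2
    have : i = Fin.last k := list_eq C hvL hv
    subst this
    exact (Subtype.ext hvi).symm
  · intro h
    have := reach_tau C hfull hu (Fin.last k)
    rwa [h] at this

end PathCoverAux

namespace PathCoverAux

variable {k m : ℕ} {W : Type*} (C : DPCover (pathGraph (k+1)) W) (hfull : C.IsFull)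
variable (e0 : ↥(C.L 0) ≃ Fin m)

noncomputable def E (i : Fin (k+1)) : ↥(C.L i) ≃ Fin m := (tau C hfull i).symm.trans e0

lemma E_step (i : Fin k) (x : ↥(C.L i.castSucc)) :
    E C hfull e0 i.succ (stepEquiv C hfull i x) = E C hfull e0 i.castSucc x := by
  simp [E, tau_succ]

lemma card_transversals {u v : W} (hu : u ∈ C.L 0) (hv : v ∈ C.L (Fin.last k)) :
    Nat.card {T : Set W // C.IsProperColoring T ∧ u ∈ T ∧ v ∈ T}
      = seqCount m k (E C hfull e0 0 ⟨u, hu⟩) (E C hfull e0 (Fin.last k) ⟨v, hv⟩) := by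
  symm
  unfold seqCount
  set c := E C hfull e0 0 ⟨u, hu⟩ with hc
  set d := E C hfull e0 (Fin.last k) ⟨v, hv⟩ with hd
  set g : (Fin (k+1) → Fin m) → Fin (k+1) → W :=
    fun a i => ((E C hfull e0 i).symm (a i) : W) with hgdef
  have hgmem : ∀ a i, g a i ∈ C.L i := fun a i => ((E C hfull e0 i).symm (a i)).2
  have hprop : ∀ a : Fin (k+1) → Fin m,
      (a 0 = c ∧ a (Fin.last k) = d ∧ ∀ i : Fin k, a i.castSucc ≠ a i.succ) →
      C.IsProperColoring (Set.range (g a)) ∧ u ∈ Set.range (g a) ∧ v ∈ Set.range (g a) := by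
    intro a ha
    have main : ∀ j : Fin k, C.H.Adj (g a j.castSucc) (g a j.succ) → False := by
      intro j hadj
      have hYX : (E C hfull e0 j.succ).symm (a j.succ)
          = stepEquiv C hfull j ((E C hfull e0 j.castSucc).symm (a j.castSucc)) :=
        (adj_iff_step C hfull (adj_cs j) _ _).mp hadj
      have := congrArg (E C hfull e0 j.succ) hYX
      rw [Equiv.apply_symm_apply, E_step, Equiv.apply_symm_apply] at this
      exact ha.2.2 j this.symm
    refine ⟨⟨?_, ?_⟩, ?_, ?_⟩
    · intro j
      refine ⟨g a j, ⟨⟨j, rfl⟩, hgmem a j⟩, ?_⟩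
      rintro w ⟨⟨i, rfl⟩, hwj⟩
      have : i = j := list_eq C (hgmem a i) hwj
      rw [this]
    · rintro x y ⟨i, rfl⟩ ⟨i', rfl⟩ hadj
      obtain ⟨b, hab, hyb⟩ := adj_local C (hgmem a i) hadj
      have hbi' : b = i' := list_eq C hyb (hgmem a i')
      subst hbi'
      rw [pathGraph_adj] at hab
      rcases hab with h1 | h2
      · have hik : (i : ℕ) < k := by omega
        have hI' : b = (⟨(i : ℕ), hik⟩ : Fin k).succ := by
          apply Fin.ext; show (b : ℕ) = (i : ℕ) + 1; omega
        rw [hI'] at hadj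
        exact main ⟨(i : ℕ), hik⟩ hadj
      · have hik : (b : ℕ) < k := by omega
        have hI : i = (⟨(b : ℕ), hik⟩ : Fin k).succ := by
          apply Fin.ext; show (i : ℕ) = (b : ℕ) + 1; omega
        rw [hI] at hadj
        exact main ⟨(b : ℕ), hik⟩ hadj.symm
    · refine ⟨0, ?_⟩
      show ((E C hfull e0 0).symm (a 0) : W) = u
      rw [ha.1, hc, Equiv.symm_apply_apply]
    · refine ⟨Fin.last k, ?_⟩
      show ((E C hfull e0 (Fin.last k)).symm (a (Fin.last k)) : W) = v
      rw [ha.2.1, hd, Equiv.symm_apply_apply]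
  apply Nat.card_eq_of_bijective (fun a => ⟨Set.range (g a.1), hprop a.1 a.2⟩)
  constructor
  · rintro ⟨a, ha⟩ ⟨a', ha'⟩ haa
    have hrange : Set.range (g a) = Set.range (g a') := congrArg Subtype.val haa
    apply Subtype.ext
    funext i
    have : g a i ∈ Set.range (g a') := hrange ▸ Set.mem_range_self i
    obtain ⟨i', hi'⟩ := this
    have hii : i' = i := list_eq C (hgmem a' i') (hi' ▸ hgmem a i)
    subst hii
    have : (E C hfull e0 i').symm (a i') = (E C hfull e0 i').symm (a' i') :=
      Subtype.ext hi'.symm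
    exact ((E C hfull e0 i').symm.injective this)
  · rintro ⟨T, hT, huT, hvT⟩
    have spec : ∀ i, ((hT.1 i).choose ∈ T ∧ (hT.1 i).choose ∈ C.L i) :=
      fun i => (hT.1 i).choose_spec.1
    set w : Fin (k+1) → W := fun i => (hT.1 i).choose with hw
    set a : Fin (k+1) → Fin m := fun i => E C hfull e0 i ⟨w i, (spec i).2⟩ with ha
    have ha1 : a 0 = c := by
      have : u = w 0 := (hT.1 0).choose_spec.2 u ⟨huT, hu⟩
      rw [ha, hc]
      exact congrArg (E C hfull e0 0) (Subtype.ext this.symm)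
    have ha2 : a (Fin.last k) = d := by
      have : v = w (Fin.last k) := (hT.1 (Fin.last k)).choose_spec.2 v ⟨hvT, hv⟩
      rw [ha, hd]
      exact congrArg (E C hfull e0 (Fin.last k)) (Subtype.ext this.symm)
    have ha3 : ∀ j : Fin k, a j.castSucc ≠ a j.succ := by
      intro j h
      have h2 : E C hfull e0 j.succ (stepEquiv C hfull j ⟨w j.castSucc, (spec _).2⟩)
          = E C hfull e0 j.succ ⟨w j.succ, (spec _).2⟩ := by
        rw [E_step]; exact h
      have h3 := (E C hfull e0 j.succ).injective h2
      have h4 : C.H.Adj (w j.castSucc) (w j.succ) := by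
        have := step_adj C hfull (adj_cs j) (⟨w j.castSucc, (spec _).2⟩ : ↥(C.L j.castSucc))
        rwa [show (step C hfull (adj_cs j) ⟨w j.castSucc, (spec _).2⟩ : W)
          = ((stepEquiv C hfull j ⟨w j.castSucc, (spec _).2⟩ : ↥(C.L j.succ)) : W) from rfl,
          h3] at this
      exact hT.2 (spec j.castSucc).1 (spec j.succ).1 h4
    refine ⟨⟨a, ha1, ha2, ha3⟩, ?_⟩
    apply Subtype.ext
    show Set.range (g a) = T
    have hg_eq : ∀ i, g a i = w i := by
      intro i
      show ((E C hfull e0 i).symm (E C hfull e0 i ⟨w i, (spec i).2⟩) : W) = w i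
      rw [Equiv.symm_apply_apply]
    ext x
    constructor
    · rintro ⟨i, rfl⟩
      rw [hg_eq i]
      exact (spec i).1
    · intro hx
      have hxL := (C.partition x).choose_spec.1
      have : x = w (C.partition x).choose :=
        (hT.1 (C.partition x).choose).choose_spec.2 x ⟨hx, hxL⟩
      exact ⟨(C.partition x).choose, (hg_eq _).trans this.symm⟩

end PathCoverAux

theorem path_full_cover_coloring_count (k : ℕ) (hk : 1 ≤ k) (m : ℕ) (hm : 2 ≤ m)
    {W : Type*} (C : DPCover (pathGraph (k + 1)) W) (hfull : C.IsFull)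
    (hcard : ∀ v, Nat.card ↥(C.L v) = m)
    (u v : W) (hu : u ∈ C.L 0) (hv : v ∈ C.L (Fin.last k)) :
    (C.H.Reachable u v →
      (Nat.card {T : Set W // C.IsProperColoring T ∧ u ∈ T ∧ v ∈ T} : ℚ) =
        ((m - 1) ^ k - (-1) ^ k) / m + (-1) ^ k) ∧
    (¬ C.H.Reachable u v →
      (Nat.card {T : Set W // C.IsProperColoring T ∧ u ∈ T ∧ v ∈ T} : ℚ) =
        ((m - 1) ^ k - (-1) ^ k) / m) := by
  classical
  open PathCoverAux in
  have hm1 : 1 ≤ m := by omega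
  have hfin : Finite ↥(C.L 0) := Nat.finite_of_card_ne_zero (by rw [hcard]; omega)
  obtain ⟨e0⟩ : Nonempty (↥(C.L 0) ≃ Fin m) := by
    haveI := Fintype.ofFinite ↥(C.L 0)
    exact ⟨Fintype.equivFinOfCardEq (by rw [← Nat.card_eq_fintype_card, hcard])⟩
  have hcount := PathCoverAux.card_transversals C hfull e0 hu hv
  set c := PathCoverAux.E C hfull e0 0 ⟨u, hu⟩ with hc
  set d := PathCoverAux.E C hfull e0 (Fin.last k) ⟨v, hv⟩ with hd
  have hiff : C.H.Reachable u v ↔ c = d := by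
    rw [PathCoverAux.reach_iff C hfull hu hv]
    have hcu : c = e0 ⟨u, hu⟩ := rfl
    have hdv : d = e0 ((PathCoverAux.tau C hfull (Fin.last k)).symm ⟨v, hv⟩) := rfl
    rw [hcu, hdv, Equiv.apply_eq_iff_eq, Equiv.eq_symm_apply]
  refine ⟨fun hr => ?_, fun hnr => ?_⟩
  · have hcd : c = d := hiff.mp hr
    rw [hcount, seqCount_eq m k hm1 c d, if_pos hcd]
  · have hcd : c ≠ d := fun h => hnr (hiff.mpr h)
    rw [hcount, seqCount_eq m k hm1 c d, if_neg hcd, add_zero]
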